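/- For 1 < ζ ≤ 2, the WSGD coefficients satisfy 1 ≥ ϑ₀^(ζ) ≥ ϑ₃^(ζ) ≥ ϑ₄^(ζ) ≥ ... ≥ 0 (the tail from index 3 is nonnegative and nonincreasing, dominated by ϑ₀ ≤ 1). -/
import Mathlib


/-- For `1 < ζ ≤ 2`, the WSGD coefficients satisfy
`1 ≥ ϑ₀ ≥ ϑ₃ ≥ ϑ₄ ≥ ... ≥ 0`. -/
theorem stmt_10 (ζ : ℝ) (hζ : 1 < ζ) (hζ2 : ζ ≤ 2) (ω θ : ℕ → ℝ)
    (hω : ∀ k, ω k = (-1 : ℝ) ^ k *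
      ((∏ i ∈ Finset.range k, (ζ - i)) / (Nat.factorial k : ℝ)))
    (hθ0 : θ 0 = (ζ/2) * ω 0)
    (hθ : ∀ k : ℕ, 1 ≤ k → θ k = (ζ/2) * ω k + ((2 - ζ)/2) * ω (k - 1)) :
    θ 0 ≤ 1 ∧ θ 3 ≤ θ 0 ∧ (∀ k : ℕ, 3 ≤ k → θ (k + 1) ≤ θ k) ∧
      (∀ k : ℕ, 3 ≤ k → 0 ≤ θ k) := by
  have hrec : ∀ k : ℕ, ω (k + 1) = ω k * (((k : ℝ) - ζ) / ((k : ℝ) + 1)) := by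
    intro k
    rw [hω, hω, Finset.prod_range_succ, Nat.factorial_succ]
    have h1 : (k.factorial : ℝ) ≠ 0 := Nat.cast_ne_zero.mpr k.factorial_ne_zero
    have h2 : ((k : ℝ) + 1) ≠ 0 := by positivity
    push_cast
    field_simp
    ring
  have hnn : ∀ k : ℕ, 2 ≤ k → 0 ≤ ω k := by
    intro k hk
    induction k, hk using Nat.le_induction with
    | base =>
      rw [hω]
      have hp : ∏ i ∈ Finset.range 2, (ζ - (i : ℝ)) = ζ * (ζ - 1) := by
        simp [Finset.prod_range_succ]
      rw [hp]
      norm_num [Nat.factorial]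
      nlinarith
    | succ n hn ih =>
      rw [hrec n]
      apply mul_nonneg ih
      apply div_nonneg
      · have : (2 : ℝ) ≤ (n : ℝ) := by exact_mod_cast hn
        linarith
      · positivity
  have hdec : ∀ k : ℕ, 2 ≤ k → ω (k + 1) ≤ ω k := by
    intro k hk
    rw [hrec k]
    have hk' : (2 : ℝ) ≤ (k : ℝ) := by exact_mod_cast hk
    have hc : ((k : ℝ) - ζ) / ((k : ℝ) + 1) ≤ 1 := by
      rw [div_le_one (by positivity)]; linarith
    calc ω k * (((k : ℝ) - ζ) / ((k : ℝ) + 1)) ≤ ω k * 1 :=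
          mul_le_mul_of_nonneg_left hc (hnn k hk)
      _ = ω k := mul_one _
  have hω0 : ω 0 = 1 := by simp [hω]
  have hθ0' : θ 0 = ζ / 2 := by rw [hθ0, hω0]; ring
  have hω2 : ω 2 = ζ * (ζ - 1) / 2 := by
    rw [hω]
    norm_num [Finset.prod_range_succ, Nat.factorial]
  have hω3 : ω 3 = ζ * (ζ - 1) * (2 - ζ) / 6 := by
    rw [hω]
    norm_num [Finset.prod_range_succ, Nat.factorial]
    ring_nf
  refine ⟨by rw [hθ0']; linarith, ?_, ?_, ?_⟩
  · rw [hθ 3 (by norm_num), hθ0']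
    norm_num [hω2, hω3]
    nlinarith [sq_nonneg (ζ - 1), sq_nonneg (2 - ζ), mul_nonneg (sub_nonneg.2 hζ.le) (sub_nonneg.2 hζ2), sq_nonneg ((ζ - 1) * (2 - ζ))]
  · intro k hk
    have h1 : (1:ℕ) ≤ k := by omega
    have h1' : (1:ℕ) ≤ k + 1 := by omega
    rw [hθ k h1, hθ (k + 1) h1']
    have he : k + 1 - 1 = k := by omega
    rw [he]
    have hk2 : 2 ≤ k := by omega
    have hd1 : ω (k + 1) ≤ ω k := hdec k hk2
    have hd2 : ω k ≤ ω (k - 1) := by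
      have := hdec (k - 1) (by omega)
      have he2 : k - 1 + 1 = k := by omega
      rwa [he2] at this
    nlinarith
  · intro k hk
    rw [hθ k (by omega)]
    have h1 : 0 ≤ ω k := hnn k (by omega)
    have h2 : 0 ≤ ω (k - 1) := hnn (k - 1) (by omega)
    nlinarith
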